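/- For every scoring matrix γ: dist_γ(s,s) = 0 for all s ∈ Σ* if and only if (i) D(γ) has no negative cycle, and (ii) for every a ∈ Σ, γ(a,a) = 0 or γ(a,‐) + γ(‐,a) = 0. -/

import Mathlib

open List

/-- A scoring matrix on alphabet `σ`; `none` represents the space symbol `‐`.
The value at `(none, none)` is irrelevant (never used on admissible columns). -/
abbrev Scoring (σ : Type*) := Option σ → Option σ → ℝ

/-- `A` is an alignment of the sequences `s` and `t`: a list of columns over
`Σ₋ × Σ₋` with no column `(‐,‐)`, whose first (resp. second) components with
spaces removed spell `s` (resp. `t`). -/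
def IsAlignment {σ : Type*} (A : List (Option σ × Option σ)) (s t : List σ) : Prop :=
  (∀ c ∈ A, c ≠ ((none : Option σ), (none : Option σ))) ∧
  A.filterMap Prod.fst = s ∧ A.filterMap Prod.snd = t

/-- The score of an alignment: the sum of `γ` over its columns. -/
def alignScore {σ : Type*} (γ : Scoring σ) (A : List (Option σ × Option σ)) : ℝ :=
  (A.map fun c => γ c.1 c.2).sum

/-- The weighted edit distance: minimum alignment score. -/
noncomputable def editDist {σ : Type*} (γ : Scoring σ) (s t : List σ) : ℝ :=
  sInf {x | ∃ A, IsAlignment A s t ∧ alignScore γ A = x}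

/-- The normalized edit distance: minimum normalized alignment score
(score divided by number of columns); for `s = t = ε` it is `0`. -/
noncomputable def ndist {σ : Type*} (γ : Scoring σ) (s t : List σ) : ℝ :=
  sInf {x | ∃ A, IsAlignment A s t ∧ alignScore γ A / (A.length : ℝ) = x}

/-- A walk in the digraph `D(γ)`: a list of vertices of `Σ₋` in which the
space `‐` never follows the space. -/
def IsWalkSeq {σ : Type*} (W : List (Option σ)) : Prop :=
  W.Chain' (fun a b => ¬(a = none ∧ b = none))

/-- The weight of a walk: the sum of the weights of its consecutive arcs. -/
def walkWeight {σ : Type*} (γ : Scoring σ) (W : List (Option σ)) : ℝ :=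
  ((W.zip W.tail).map fun p => γ p.1 p.2).sum

/-- `D(γ)` has a cycle of negative total weight (cycles start and end at a
vertex of `Σ`). -/
def HasNegCycle {σ : Type*} (γ : Scoring σ) : Prop :=
  ∃ (a : σ) (W : List (Option σ)),
    IsWalkSeq (some a :: (W ++ [some a])) ∧
    walkWeight γ (some a :: (W ++ [some a])) < 0

/-- The shortest-walk distance from `x` to `y` in `D(γ)`. -/
noncomputable def walkDist {σ : Type*} (γ : Scoring σ) (x y : Option σ) : ℝ :=
  sInf {w | ∃ W : List (Option σ), IsWalkSeq W ∧ W.head? = some x ∧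
    W.getLast? = some y ∧ walkWeight γ W = w}

/-- A column of an extended alignment: a nonempty sequence over `Σ₋`, with at
least one non-space symbol, no two consecutive spaces, and not having a space
at both ends. -/
def IsExtCol {σ : Type*} (c : List (Option σ)) : Prop :=
  c ≠ [] ∧ (∃ x ∈ c, x ≠ none) ∧
  c.Chain' (fun a b => ¬(a = none ∧ b = none)) ∧
  ¬(c.head? = some none ∧ c.getLast? = some none)

/-- An extended alignment of `s, t`: a list of admissible columns whose first
symbols (spaces removed) spell `s` and whose last symbols spell `t`. -/
def IsExtAlignment {σ : Type*} (E : List (List (Option σ))) (s t : List σ) : Prop :=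
  (∀ c ∈ E, IsExtCol c) ∧
  E.filterMap (fun c => c.head?.bind id) = s ∧
  E.filterMap (fun c => c.getLast?.bind id) = t

/-- The extended edit distance: minimum total score over extended alignments,
where the score of a column is the sum of `γ` over its consecutive pairs. -/
noncomputable def edist {σ : Type*} (γ : Scoring σ) (s t : List σ) : ℝ :=
  sInf {x | ∃ E, IsExtAlignment E s t ∧ (E.map (walkWeight γ)).sum = x}

/-- `f` is a premetric: `f x x = 0` and `f x y ≥ 0`. -/
def IsPremetric {σ : Type*} (f : List σ → List σ → ℝ) : Prop :=
  (∀ s, f s s = 0) ∧ (∀ s t, 0 ≤ f s t)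

section Aux
variable {σ : Type*}

@[simp] lemma ww_nil (γ : Scoring σ) : walkWeight γ [] = 0 := rfl

@[simp] lemma ww_single (γ : Scoring σ) (x : Option σ) : walkWeight γ [x] = 0 := rfl

@[simp] lemma ww_cons (γ : Scoring σ) (x y : Option σ) (t : List (Option σ)) :
    walkWeight γ (x :: y :: t) = γ x y + walkWeight γ (y :: t) := by
  simp [walkWeight]

lemma ww_append (γ : Scoring σ) (xs : List (Option σ)) (v : Option σ) (ys : List (Option σ)) :
    walkWeight γ (xs ++ v :: ys) = walkWeight γ (xs ++ [v]) + walkWeight γ (v :: ys) := by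
  induction xs with
  | nil => simp
  | cons x xs ih =>
    cases xs with
    | nil => simp [ww_cons]
    | cons x' xs' => simp only [List.cons_append, ww_cons] at *; rw [ih]; ring

lemma zip_tail_fst (Q : List (Option σ)) :
    (Q.zip Q.tail).filterMap Prod.fst = Q.dropLast.filterMap id := by
  induction Q with
  | nil => simp
  | cons x t ih =>
    cases t with
    | nil => simp
    | cons y t' =>
      simp only [List.tail_cons, List.zip_cons_cons, List.filterMap_cons] at *
      cases x with
      | none => simpa using ih
      | some a => simpa using congrArg (a :: ·) ih

lemma zip_tail_snd (Q : List (Option σ)) :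
    (Q.zip Q.tail).filterMap Prod.snd = Q.tail.filterMap id := by
  induction Q with
  | nil => simp
  | cons x t ih =>
    cases t with
    | nil => simp
    | cons y t' =>
      simp only [List.tail_cons, List.zip_cons_cons, List.filterMap_cons] at *
      cases y with
      | none => simpa using ih
      | some a => simpa using congrArg (a :: ·) ih

lemma chain'_zip_tail {R : Option σ → Option σ → Prop} {Q : List (Option σ)}
    (h : Q.Chain' R) : ∀ p ∈ Q.zip Q.tail, R p.1 p.2 := by
  induction Q with
  | nil => simp
  | cons x t ih =>
    cases t with
    | nil => simp
    | cons y t' =>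
      unfold List.Chain' at h; rw [List.isChain_cons_cons] at h
      intro p hp
      simp only [List.tail_cons, List.zip_cons_cons, List.mem_cons] at hp
      rcases hp with rfl | hp
      · exact h.1
      · exact ih h.2 p hp

lemma length_le_col {A : List (Option σ × Option σ)}
    (h : ∀ c ∈ A, c ≠ ((none : Option σ), (none : Option σ))) :
    A.length ≤ (A.filterMap Prod.fst).length + (A.filterMap Prod.snd).length := by
  induction A with
  | nil => simp
  | cons c A ih =>
    have hc := h c (by simp)
    have ih' := ih (fun d hd => h d (by simp [hd]))
    obtain ⟨c1, c2⟩ := c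
    cases c1 <;> cases c2 <;> simp_all [List.filterMap_cons] <;> omega

end Aux
section Aux2
variable {σ : Type*}

lemma exists_lb [Fintype σ] (γ : Scoring σ) :
    ∃ M : ℝ, 0 ≤ M ∧ ∀ x y : Option σ, -M ≤ γ x y := by
  obtain ⟨M, hM⟩ := Finite.exists_le (fun p : Option σ × Option σ => -γ p.1 p.2)
  refine ⟨max M 0, le_max_right _ _, fun x y => ?_⟩
  have := hM (x, y)
  simp only at this
  nlinarith [le_max_left M 0]

lemma score_ge (γ : Scoring σ) {M : ℝ} (hM : ∀ x y : Option σ, -M ≤ γ x y)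
    (A : List (Option σ × Option σ)) : -(A.length * M) ≤ alignScore γ A := by
  have h := List.card_nsmul_le_sum (A.map fun c => γ c.1 c.2) (-M)
    (by intro x hx; simp only [List.mem_map] at hx; obtain ⟨c, _, rfl⟩ := hx; exact hM _ _)
  simp only [List.length_map, nsmul_eq_mul] at h
  calc -(A.length * M) = (A.length : ℝ) * (-M) := by ring
  _ ≤ _ := h

lemma bddBelow_editSet [Fintype σ] (γ : Scoring σ) (s t : List σ) :
    BddBelow {x | ∃ A, IsAlignment A s t ∧ alignScore γ A = x} := by
  obtain ⟨M, hM0, hM⟩ := exists_lb γ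
  refine ⟨-((s.length + t.length) * M), fun x hx => ?_⟩
  obtain ⟨A, hA, rfl⟩ := hx
  have hlen : A.length ≤ s.length + t.length := by
    have := length_le_col hA.1
    rw [hA.2.1, hA.2.2] at this; exact this
  have h1 := score_ge γ hM A
  have h2 : (A.length : ℝ) * M ≤ (s.length + t.length : ℕ) * M := by
    apply mul_le_mul_of_nonneg_right _ hM0
    exact_mod_cast hlen
  push_cast at h2 ⊢
  linarith

lemma exists_zero_align (γ : Scoring σ)
    (hd : ∀ a : σ, γ (some a) (some a) = 0 ∨ γ (some a) none + γ none (some a) = 0)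
    (s : List σ) : ∃ A, IsAlignment A s s ∧ alignScore γ A = 0 := by
  induction s with
  | nil => exact ⟨[], ⟨by simp, by simp, by simp⟩, by simp [alignScore]⟩
  | cons b s ih =>
    obtain ⟨A, ⟨h1, h2, h3⟩, hsc⟩ := ih
    rcases hd b with hb | hb
    · refine ⟨(some b, some b) :: A, ⟨?_, ?_, ?_⟩, ?_⟩
      · intro c hc; rcases List.mem_cons.1 hc with rfl | hc; · simp
        · exact h1 c hc
      · simp [List.filterMap_cons, h2]
      · simp [List.filterMap_cons, h3]
      · simp [alignScore] at hsc ⊢; rw [hb]; simpa using hsc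
    · refine ⟨(some b, none) :: (none, some b) :: A, ⟨?_, ?_, ?_⟩, ?_⟩
      · intro c hc
        rcases List.mem_cons.1 hc with rfl | hc; · simp
        rcases List.mem_cons.1 hc with rfl | hc; · simp
        · exact h1 c hc
      · simp [List.filterMap_cons, h2]
      · simp [List.filterMap_cons, h3]
      · simp [alignScore] at hsc ⊢; rw [← hsc]; linarith [hb]

lemma sum_map_sub {α : Type*} (l : List α) (f g : α → ℝ) :
    (l.map fun c => f c - g c).sum = (l.map f).sum - (l.map g).sum := by
  induction l with
  | nil => simp
  | cons x t ih => simp [ih]; ring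

lemma sum_pi_eq (π : Option σ → ℝ) (L : List (Option σ)) :
    (L.map π).sum + ((L.filterMap id).length : ℕ) * π none
      = ((L.filterMap id).map (fun b => π (some b))).sum + (L.length : ℕ) * π none := by
  induction L with
  | nil => simp
  | cons x t ih =>
    cases x with
    | none =>
      have e : List.filterMap id (none :: t) = List.filterMap id t := by simp
      rw [e]; simp only [List.map_cons, List.sum_cons, List.length_cons]
      push_cast; push_cast at ih; linarith
    | some b =>
      have e : List.filterMap id (some b :: t) = b :: List.filterMap id t := by simp
      rw [e]; simp only [List.map_cons, List.sum_cons, List.length_cons]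
      push_cast; push_cast at ih; linarith

end Aux2
section Pot
variable {σ : Type*}

lemma closed_nonneg (γ : Scoring σ) (hnc : ¬ HasNegCycle γ) (u : Option σ)
    (M : List (Option σ)) (h : IsWalkSeq ((u :: M) ++ [u])) :
    0 ≤ walkWeight γ ((u :: M) ++ [u]) := by
  cases u with
  | some a =>
    by_contra hlt
    exact hnc ⟨a, M, h, not_le.1 hlt⟩
  | none =>
    cases M with
    | nil =>
      exfalso
      have h' : List.Chain' (fun a b => ¬(a = none ∧ b = none))
          [(none : Option σ), none] := h
      exact (List.isChain_cons_cons.1 h').1 ⟨rfl, rfl⟩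
    | cons m M' =>
      have h' : List.Chain' (fun a b => ¬(a = none ∧ b = none))
          (none :: m :: (M' ++ [none])) := by
        have e : ((none :: m :: M') ++ [(none : Option σ)])
            = none :: m :: (M' ++ [none]) := by simp
        rw [← e]; exact h
      obtain ⟨hrel, htail⟩ := List.isChain_cons_cons.1 h'
      have hm : m ≠ none := fun hmn => hrel ⟨rfl, hmn⟩
      obtain ⟨b, rfl⟩ := Option.ne_none_iff_exists'.1 hm
      have hchainR : IsWalkSeq (some b :: ((M' ++ [none]) ++ [some b])) := by
        show List.IsChain _ ((some b :: (M' ++ [none])) ++ [some b])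
        rw [List.isChain_append]
        refine ⟨htail, List.isChain_singleton _, ?_⟩
        intro x hx y hy
        simp only [Option.mem_def, List.head?_cons, Option.some.injEq] at hy
        subst hy
        simp
      have w1 : walkWeight γ ((none :: (some b :: M')) ++ [none])
          = γ none (some b) + walkWeight γ ((some b :: M') ++ [none]) := by
        have eq1 : (none :: (some b :: M')) ++ [(none : Option σ)]
            = none :: some b :: (M' ++ [none]) := by simp
        have eq2 : (some b :: M') ++ [(none : Option σ)]
            = some b :: (M' ++ [none]) := by simp
        rw [eq1, eq2, ww_cons]
      have w2 : walkWeight γ (some b :: ((M' ++ [none]) ++ [some b]))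
          = walkWeight γ ((some b :: M') ++ [none]) + γ none (some b) := by
        have eq1 : some b :: ((M' ++ [none]) ++ [some b])
            = (some b :: M') ++ ((none : Option σ) :: [some b]) := by simp
        rw [eq1, ww_append]
        simp [ww_cons]
      by_contra hlt
      refine hnc ⟨b, M' ++ [none], hchainR, ?_⟩
      rw [w2]
      have hlt' := not_le.1 hlt
      rw [w1] at hlt'
      linarith

lemma exists_dup {α : Type*} : ∀ {l : List α}, ¬ l.Nodup →
    ∃ (u : α) (P M S : List α), l = (P ++ (u :: M)) ++ (u :: S) := by
  intro l
  induction l with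
  | nil => intro h; simp at h
  | cons x t ih =>
    intro h
    by_cases hx : x ∈ t
    · obtain ⟨M, S, rfl⟩ := List.append_of_mem hx
      exact ⟨x, [], M, S, by simp⟩
    · have : ¬ t.Nodup := fun hn => h (List.nodup_cons.2 ⟨hx, hn⟩)
      obtain ⟨u, P, M, S, rfl⟩ := ih this
      exact ⟨u, x :: P, M, S, by simp⟩

lemma shorten [Fintype σ] (γ : Scoring σ) (hnc : ¬ HasNegCycle γ) :
    ∀ (n : ℕ) (W : List (Option σ)), W.length ≤ n → IsWalkSeq W →
    ∃ W', IsWalkSeq W' ∧ W'.head? = W.head? ∧ W'.getLast? = W.getLast? ∧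
      W'.length ≤ Fintype.card (Option σ) ∧ walkWeight γ W' ≤ walkWeight γ W := by
  intro n
  induction n with
  | zero =>
    intro W hW h
    refine ⟨W, h, rfl, rfl, ?_, le_refl _⟩
    simp only [Nat.le_zero] at hW
    simp [hW]
  | succ n ih =>
    intro W hW h
    by_cases hc : W.length ≤ Fintype.card (Option σ)
    · exact ⟨W, h, rfl, rfl, hc, le_refl _⟩
    · have hnd : ¬ W.Nodup := fun hn => hc hn.length_le_card
      obtain ⟨u, P, M, S, rfl⟩ := exists_dup hnd
      have h0 : List.IsChain (fun a b => ¬(a = none ∧ b = none))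
          ((P ++ (u :: M)) ++ (u :: S)) := h
      rw [List.isChain_append] at h0
      obtain ⟨h1, huS, juncA⟩ := h0
      have h1' := h1
      rw [List.isChain_append] at h1'
      obtain ⟨hP, huM, junc1⟩ := h1'
      -- removed closed walk is admissible and nonnegative
      have hlast1 : (P ++ (u :: M)).getLast? = (u :: M).getLast? := by
        rw [List.getLast?_append]
        exact Option.or_of_isSome (List.getLast?_isSome.2 (by simp))
      have hcyc : IsWalkSeq ((u :: M) ++ [u]) := by
        show List.IsChain _ ((u :: M) ++ [u])
        rw [List.isChain_append]
        refine ⟨huM, List.isChain_singleton _, ?_⟩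
        intro x hx y hy
        simp only [Option.mem_def, List.head?_cons, Option.some.injEq] at hy
        subst hy
        refine juncA x ?_ u (by simp)
        rw [hlast1]; exact hx
      have hcyc0 : 0 ≤ walkWeight γ ((u :: M) ++ [u]) := closed_nonneg γ hnc u M hcyc
      -- spliced walk
      have hW2 : IsWalkSeq (P ++ (u :: S)) := by
        show List.IsChain _ (P ++ (u :: S))
        rw [List.isChain_append]
        refine ⟨hP, huS, ?_⟩
        intro x hx y hy
        simp only [Option.mem_def, List.head?_cons, Option.some.injEq] at hy
        subst hy
        exact junc1 x hx u (by simp)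
      have hhead : (P ++ (u :: S)).head? = ((P ++ (u :: M)) ++ (u :: S)).head? := by
        rw [List.head?_append, List.head?_append, List.head?_append]
        cases P <;> simp
      have hlast : (P ++ (u :: S)).getLast? = ((P ++ (u :: M)) ++ (u :: S)).getLast? := by
        rw [List.getLast?_append, List.getLast?_append]
        have hs : ((u :: S).getLast?).isSome = true := List.getLast?_isSome.2 (by simp)
        rw [Option.or_of_isSome hs, Option.or_of_isSome hs]
      have hw : walkWeight γ (P ++ (u :: S))
          ≤ walkWeight γ ((P ++ (u :: M)) ++ (u :: S)) := by
        have e1 : walkWeight γ ((P ++ (u :: M)) ++ (u :: S))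
            = walkWeight γ ((P ++ (u :: M)) ++ [u]) + walkWeight γ (u :: S) :=
          ww_append γ _ u S
        have eX : (P ++ (u :: M)) ++ [u] = P ++ (u :: (M ++ [u])) := by simp
        have e2 : walkWeight γ (P ++ (u :: (M ++ [u])))
            = walkWeight γ (P ++ [u]) + walkWeight γ (u :: (M ++ [u])) :=
          ww_append γ P u (M ++ [u])
        have e3 : walkWeight γ (P ++ (u :: S))
            = walkWeight γ (P ++ [u]) + walkWeight γ (u :: S) := ww_append γ P u S
        have ecyc : walkWeight γ (u :: (M ++ [u])) = walkWeight γ ((u :: M) ++ [u]) := by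
          rw [List.cons_append]
        rw [e1, eX, e2, e3]
        linarith [ecyc ▸ hcyc0]
      have hlen : (P ++ (u :: S)).length ≤ n := by
        have h1 : ((P ++ (u :: M)) ++ (u :: S)).length ≤ n + 1 := hW
        simp only [List.length_append, List.length_cons] at h1 ⊢
        omega
      obtain ⟨W', hW', hh', hl', hlen', hw'⟩ := ih (P ++ (u :: S)) hlen hW2
      exact ⟨W', hW', hh'.trans hhead, hl'.trans hlast, hlen', hw'.trans hw⟩

end Pot
section Pot2
variable {σ : Type*}

lemma ww_ge (γ : Scoring σ) {M : ℝ} (hM0 : 0 ≤ M) (hM : ∀ x y : Option σ, -M ≤ γ x y)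
    (W : List (Option σ)) : -(W.length * M) ≤ walkWeight γ W := by
  have h := List.card_nsmul_le_sum ((W.zip W.tail).map fun p => γ p.1 p.2) (-M)
    (by intro x hx; simp only [List.mem_map] at hx; obtain ⟨p, _, rfl⟩ := hx; exact hM _ _)
  simp only [List.length_map, nsmul_eq_mul] at h
  have hzl : (W.zip W.tail).length ≤ W.length := by
    rw [List.length_zip]; omega
  have : ((W.zip W.tail).length : ℝ) * M ≤ (W.length : ℝ) * M := by
    apply mul_le_mul_of_nonneg_right _ hM0; exact_mod_cast hzl
  calc -((W.length : ℝ) * M) ≤ -(((W.zip W.tail).length : ℝ) * M) := by linarith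
  _ ≤ _ := by unfold walkWeight; linarith
  
def walkSet (γ : Scoring σ) (x y : Option σ) : Set ℝ :=
  {w | ∃ W : List (Option σ), IsWalkSeq W ∧ W.head? = some x ∧
    W.getLast? = some y ∧ walkWeight γ W = w}

lemma walkDist_eq (γ : Scoring σ) (x y : Option σ) :
    walkDist γ x y = sInf (walkSet γ x y) := rfl

lemma walkSet_nonempty (γ : Scoring σ) (a₀ : σ) (x : Option σ) :
    (walkSet γ (some a₀) x).Nonempty := by
  refine ⟨walkWeight γ [some a₀, x], [some a₀, x], ?_, by simp, by simp, rfl⟩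
  show List.IsChain _ _
  rw [List.isChain_cons_cons]
  exact ⟨by simp, List.isChain_singleton _⟩

lemma walkSet_bddBelow [Fintype σ] (γ : Scoring σ) (hnc : ¬ HasNegCycle γ)
    (x y : Option σ) : BddBelow (walkSet γ x y) := by
  obtain ⟨M, hM0, hM⟩ := exists_lb γ
  refine ⟨-(Fintype.card (Option σ) * M), fun w hw => ?_⟩
  obtain ⟨W, hW, hh, hl, rfl⟩ := hw
  obtain ⟨W', hW', _, _, hlen', hw'⟩ := shorten γ hnc W.length W (le_refl _) hW
  have h1 := ww_ge γ hM0 hM W'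
  have h2 : (W'.length : ℝ) * M ≤ (Fintype.card (Option σ) : ℝ) * M := by
    apply mul_le_mul_of_nonneg_right _ hM0; exact_mod_cast hlen'
  linarith

lemma walkDist_triangle [Fintype σ] (γ : Scoring σ) (hnc : ¬ HasNegCycle γ) (a₀ : σ)
    (x y : Option σ) (hxy : ¬(x = none ∧ y = none)) :
    walkDist γ (some a₀) y ≤ walkDist γ (some a₀) x + γ x y := by
  have key : ∀ w ∈ walkSet γ (some a₀) x, walkDist γ (some a₀) y - γ x y ≤ w := by
    rintro w ⟨W, hW, hh, hl, rfl⟩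
    obtain ⟨W0, rfl⟩ := List.getLast?_eq_some_iff.1 hl
    have hmem : walkWeight γ (W0 ++ [x]) + γ x y ∈ walkSet γ (some a₀) y := by
      refine ⟨(W0 ++ [x]) ++ [y], ?_, ?_, ?_, ?_⟩
      · show List.IsChain _ _
        rw [List.isChain_append]
        refine ⟨hW, List.isChain_singleton _, ?_⟩
        intro p hp q hq
        simp only [Option.mem_def, List.head?_cons, Option.some.injEq] at hq
        subst hq
        rw [hl] at hp
        simp only [Option.mem_def, Option.some.injEq] at hp
        subst hp
        exact hxy
      · rw [List.head?_append]
        cases W0 <;> simp_all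
      · rw [List.getLast?_append]; simp
      · have e : (W0 ++ [x]) ++ [y] = W0 ++ (x :: [y]) := by simp
        rw [e, ww_append]
        simp [ww_cons]
    have := csInf_le (walkSet_bddBelow γ hnc (some a₀) y) hmem
    rw [walkDist_eq]
    linarith
  have h2 : walkDist γ (some a₀) y - γ x y ≤ walkDist γ (some a₀) x := by
    rw [walkDist_eq γ (some a₀) x]
    exact le_csInf (walkSet_nonempty γ a₀ x) key
  linarith

lemma score_nonneg [Fintype σ] (γ : Scoring σ) (hnc : ¬ HasNegCycle γ)
    (s : List σ) (A : List (Option σ × Option σ)) (hA : IsAlignment A s s) :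
    0 ≤ alignScore γ A := by
  rcases isEmpty_or_nonempty σ with hσ | ⟨⟨a₀⟩⟩
  · cases A with
    | nil => simp [alignScore]
    | cons c t =>
      obtain ⟨c1, c2⟩ := c
      cases c1 with
      | some v => exact (hσ.false v).elim
      | none =>
        cases c2 with
        | some v => exact (hσ.false v).elim
        | none => exact absurd rfl (hA.1 _ (by simp))
  · set π : Option σ → ℝ := walkDist γ (some a₀) with hπ
    have tri : ∀ c ∈ A, π c.2 - π c.1 ≤ γ c.1 c.2 := by
      intro c hc
      have hcol : ¬(c.1 = none ∧ c.2 = none) := by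
        intro ⟨h1, h2⟩
        exact hA.1 c hc (Prod.ext h1 h2)
      have := walkDist_triangle γ hnc a₀ c.1 c.2 hcol
      rw [hπ]; linarith
    have h1 : (A.map fun c => π c.2 - π c.1).sum ≤ alignScore γ A :=
      List.sum_le_sum tri
    have h2 : (A.map fun c => π c.2 - π c.1).sum
        = (A.map fun c => π c.2).sum - (A.map fun c => π c.1).sum :=
      sum_map_sub A _ _
    have e1 := sum_pi_eq π (A.map Prod.fst)
    have e2 := sum_pi_eq π (A.map Prod.snd)
    have ef : (A.map Prod.fst).filterMap id = s := by
      rw [List.filterMap_map]; simpa using hA.2.1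
    have es : (A.map Prod.snd).filterMap id = s := by
      rw [List.filterMap_map]; simpa using hA.2.2
    rw [ef, List.map_map, List.length_map] at e1
    rw [es, List.map_map, List.length_map] at e2
    have emf : (A.map (π ∘ Prod.fst)).sum = (A.map fun c => π c.1).sum := rfl
    have ems : (A.map (π ∘ Prod.snd)).sum = (A.map fun c => π c.2).sum := rfl
    rw [emf] at e1
    rw [ems] at e2
    have : (A.map fun c => π c.2).sum = (A.map fun c => π c.1).sum := by linarith
    linarith [h1, h2, this]

end Pot2
section Fwd
variable {σ : Type*}

def Qrep (a : σ) (W : List (Option σ)) : ℕ → List (Option σ)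
  | 0 => [some a]
  | n+1 => (some a :: W) ++ Qrep a W n

lemma Qrep_cons (a : σ) (W : List (Option σ)) (n : ℕ) :
    ∃ T, Qrep a W n = some a :: T := by
  cases n with
  | zero => exact ⟨[], rfl⟩
  | succ n => exact ⟨W ++ Qrep a W n, rfl⟩

lemma Qrep_head? (a : σ) (W : List (Option σ)) (n : ℕ) :
    (Qrep a W n).head? = some (some a) := by
  obtain ⟨T, hT⟩ := Qrep_cons a W n
  rw [hT]; rfl

lemma Qrep_getLast? (a : σ) (W : List (Option σ)) (n : ℕ) :
    (Qrep a W n).getLast? = some (some a) := by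
  induction n with
  | zero => rfl
  | succ n ih =>
    show ((some a :: W) ++ Qrep a W n).getLast? = some (some a)
    rw [List.getLast?_append, ih]
    rfl

lemma Qrep_chain (a : σ) (W : List (Option σ))
    (h : IsWalkSeq (some a :: (W ++ [some a]))) (n : ℕ) :
    IsWalkSeq (Qrep a W n) := by
  have h' : List.IsChain (fun x y => ¬(x = none ∧ y = none))
      ((some a :: W) ++ [some a]) := by
    have e : (some a :: W) ++ [some a] = some a :: (W ++ [some a]) := by simp
    rw [e]; exact h
  rw [List.isChain_append] at h'
  obtain ⟨hC1, _, juncC⟩ := h'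
  induction n with
  | zero => exact List.isChain_singleton _
  | succ n ih =>
    show List.IsChain _ ((some a :: W) ++ Qrep a W n)
    rw [List.isChain_append]
    refine ⟨hC1, ih, ?_⟩
    intro x hx y hy
    rw [Qrep_head? a W n] at hy
    simp only [Option.mem_def, Option.some.injEq] at hy
    subst hy
    exact juncC x hx (some a) (by simp)

lemma Qrep_weight (γ : Scoring σ) (a : σ) (W : List (Option σ)) (n : ℕ) :
    walkWeight γ (Qrep a W n) = n * walkWeight γ (some a :: (W ++ [some a])) := by
  induction n with
  | zero => simp [Qrep]
  | succ n ih =>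
    obtain ⟨T, hT⟩ := Qrep_cons a W n
    have e1 : walkWeight γ ((some a :: W) ++ (some a :: T))
        = walkWeight γ ((some a :: W) ++ [some a]) + walkWeight γ (some a :: T) :=
      ww_append γ _ _ _
    have e2 : (some a :: W) ++ [some a] = some a :: (W ++ [some a]) := by simp
    show walkWeight γ ((some a :: W) ++ Qrep a W n) = _
    rw [hT] at ih ⊢
    rw [e1, e2, ih]
    push_cast
    ring

lemma no_neg_of_all_zero [Fintype σ] (γ : Scoring σ)
    (h0 : ∀ s : List σ, editDist γ s s = 0) : ¬ HasNegCycle γ := by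
  rintro ⟨a, W, hch, hneg⟩
  set w := walkWeight γ (some a :: (W ++ [some a])) with hw
  have key : ∀ n : ℕ,
      0 ≤ γ none (some a) + n * w + γ (some a) none := by
    intro n
    set Q := Qrep a W n with hQ
    set s : List σ := Q.filterMap id with hs
    set A : List (Option σ × Option σ) :=
      ((none, some a) :: (Q.zip Q.tail)) ++ [(some a, none)] with hA
    have hcol : ∀ c ∈ A, c ≠ ((none : Option σ), (none : Option σ)) := by
      intro c hc
      rw [hA] at hc
      rcases List.mem_append.1 hc with hc | hc
      · rcases List.mem_cons.1 hc with rfl | hc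
        · simp
        · have := chain'_zip_tail (Qrep_chain a W hch n) c hc
          intro hcc
          rw [hcc] at this
          exact this ⟨rfl, rfl⟩
      · simp only [List.mem_singleton] at hc
        subst hc; simp
    have hfst : A.filterMap Prod.fst = s := by
      obtain ⟨Q', hQ'⟩ := List.getLast?_eq_some_iff.1 (Qrep_getLast? a W n)
      rw [hA, List.filterMap_append, List.filterMap_cons]
      simp only []
      rw [zip_tail_fst, hs, hQ, hQ', List.dropLast_concat]
      simp [List.filterMap_append]
    have hsnd : A.filterMap Prod.snd = s := by
      obtain ⟨T, hT⟩ := Qrep_cons a W n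
      rw [hA, List.filterMap_append, List.filterMap_cons]
      simp only []
      rw [zip_tail_snd, hs, hQ, hT]
      simp
    have hscore : alignScore γ A = γ none (some a) + walkWeight γ Q + γ (some a) none := by
      rw [hA]
      simp only [alignScore, List.map_append, List.map_cons, List.sum_append,
        List.sum_cons, List.map_nil, List.sum_nil]
      have : ((Q.zip Q.tail).map fun c => γ c.1 c.2).sum = walkWeight γ Q := rfl
      rw [this]
      ring
    have hmem : alignScore γ A ∈ {x | ∃ B, IsAlignment B s s ∧ alignScore γ B = x} :=
      ⟨A, ⟨hcol, hfst, hsnd⟩, rfl⟩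
    have hle := csInf_le (bddBelow_editSet γ s s) hmem
    have h0s : editDist γ s s = 0 := h0 s
    rw [editDist] at h0s
    rw [h0s] at hle
    rw [hscore, hQ, Qrep_weight γ a W n, ← hw] at hle
    linarith
  set c := γ none (some a) + γ (some a) none with hc
  have hwneg : w < 0 := hneg
  obtain ⟨n, hn⟩ := exists_nat_gt (c / (-w))
  have h1 : c < n * (-w) := (div_lt_iff₀ (by linarith)).1 hn
  have h2 := key n
  rw [hc] at h1
  linarith

lemma align_single (γ : Scoring σ) (a : σ) (A : List (Option σ × Option σ))
    (hA : IsAlignment A [a] [a]) :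
    alignScore γ A = γ (some a) (some a) ∨
    alignScore γ A = γ (some a) none + γ none (some a) := by
  obtain ⟨h1, h2, h3⟩ := hA
  have hlen : A.length ≤ 2 := by
    have := length_le_col h1
    rw [h2, h3] at this
    simpa using this
  rcases A with _ | ⟨⟨c1, c2⟩, _ | ⟨⟨d1, d2⟩, _ | ⟨e, t⟩⟩⟩
  · simp at h2
  · cases c1 <;> cases c2 <;>
      simp_all [alignScore, List.filterMap_cons]
  · have hne : ((c1, c2) : Option σ × Option σ) ≠ (none, none) := h1 _ (by simp)
    have hne2 : ((d1, d2) : Option σ × Option σ) ≠ (none, none) := h1 _ (by simp)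
    cases c1 <;> cases c2 <;> cases d1 <;> cases d2 <;>
      simp at h2 h3 <;> try subst_vars
    all_goals
      first
        | exact absurd rfl hne
        | exact absurd rfl hne2
        | (left; simp [alignScore]; done)
        | (right; simp [alignScore]; try ring)
  · simp at hlen
end Fwd
theorem stmt1 {σ : Type*} [Fintype σ] (γ : Scoring σ) :
    (∀ s : List σ, editDist γ s s = 0) ↔
      (¬ HasNegCycle γ ∧
        ∀ a : σ, γ (some a) (some a) = 0 ∨ γ (some a) none + γ none (some a) = 0) := by
  constructor
  · intro h0
    refine ⟨no_neg_of_all_zero γ h0, ?_⟩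
    intro a
    have h := h0 [a]
    rw [editDist] at h
    have hset : {x | ∃ A, IsAlignment A [a] [a] ∧ alignScore γ A = x}
        = {γ (some a) (some a), γ (some a) none + γ none (some a)} := by
      ext x
      constructor
      · rintro ⟨A, hA, rfl⟩
        rcases align_single γ a A hA with h' | h' <;> simp [h']
      · intro hx
        simp only [Set.mem_insert_iff, Set.mem_singleton_iff] at hx
        rcases hx with rfl | rfl
        · exact ⟨[(some a, some a)], ⟨by simp, rfl, rfl⟩, by simp [alignScore]⟩
        · exact ⟨[(some a, none), (none, some a)], ⟨by simp, rfl, rfl⟩,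
            by simp [alignScore]⟩
    rw [hset, csInf_pair] at h
    rcases le_total (γ (some a) (some a)) (γ (some a) none + γ none (some a)) with hle | hle
    · left; rwa [inf_eq_left.2 hle] at h
    · right; rwa [inf_eq_right.2 hle] at h
  · rintro ⟨hnc, hd⟩ s
    obtain ⟨A0, hA0, hsc0⟩ := exists_zero_align γ hd s
    rw [editDist]
    apply _root_.le_antisymm
    · exact csInf_le (bddBelow_editSet γ s s) ⟨A0, hA0, hsc0⟩
    · refine le_csInf ⟨0, A0, hA0, hsc0⟩ ?_
      rintro x ⟨A, hA, rfl⟩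
      exact score_nonneg γ hnc s A hA
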